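/- (Conditional inverse moment of the GAR(1) process.) Let ν>2, r∈(0,1) and z>0. Then ∫₀^∞ (z')^{−1} · g_{ν/2,r}(z', z) dz' = [(ν/2)^{ν/2} z^{ν/2−1} e^{−(ν/2)z}/Γ(ν/2)] · (ν/(2(1−r))) · exp(−ν z r/(2(1−r))) · ∑_{k=0}^∞ (ν z r/(2(1−r)))^k / (k!·(ν/2 + k − 1)). That is, for the GAR(1) process with φ=ν/2 and r=ρ^j, E(Z_{t+j}^{−1} | Z_t = z) = (ν/(2(1−ρ^j))) exp(−ν z ρ^j/(2(1−ρ^j))) ∑_{k=0}^∞ (ν z ρ^j/(2(1−ρ^j)))^k / (k!(ν/2+k−1)). -/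

import Mathlib

open MeasureTheory Real Set

/-- Modified Bessel function of the first kind (series form). -/
noncomputable def besselI (α x : ℝ) : ℝ :=
  ∑' k : ℕ, (x / 2) ^ (2 * (k : ℝ) + α) / (Real.Gamma ((k : ℝ) + α + 1) * (Nat.factorial k : ℝ))

/-- Gamma density with rate `γ` and shape `α`. -/
noncomputable def gammaPdf (γ α z : ℝ) : ℝ :=
  γ ^ α * z ^ (α - 1) * Real.exp (-γ * z) / Real.Gamma α

/-- Kibble bivariate gamma density with parameters `φ > 0` and `r ∈ (0,1)`. -/
noncomputable def kibble (φ r z₁ z₂ : ℝ) : ℝ :=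
  φ ^ (φ + 1) / ((1 - r) * Real.Gamma φ) * (z₁ * z₂ / r) ^ ((φ - 1) / 2) *
    Real.exp (-φ * (z₁ + z₂) / (1 - r)) *
    besselI (φ - 1) (2 * φ * Real.sqrt (r * z₁ * z₂) / (1 - r))

/-- Conditional normal density of the NSVt model given latent `z`: `N(μ, σ²/z)`. -/
noncomputable def normCond (σ μ y z : ℝ) : ℝ :=
  Real.sqrt z / (Real.sqrt (2 * Real.pi) * σ) * Real.exp (-z * (y - μ) ^ 2 / (2 * σ ^ 2))

/-- Student-t density with `ν` degrees of freedom, location `μ` and scale `σ`. -/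
noncomputable def studentTPdf (ν μ σ y : ℝ) : ℝ :=
  Real.Gamma ((ν + 1) / 2) / (Real.Gamma (ν / 2) * Real.sqrt (Real.pi * ν) * σ) *
    (1 + (y - μ) ^ 2 / (ν * σ ^ 2)) ^ (-(ν + 1) / 2)

/-- Gauss hypergeometric series `₂F₁(a₁,a₂;b;x)`. -/
noncomputable def hyp2F1 (a₁ a₂ b x : ℝ) : ℝ :=
  ∑' k : ℕ, Real.Gamma ((k : ℝ) + a₁) * Real.Gamma ((k : ℝ) + a₂) * Real.Gamma b /
    (Real.Gamma a₁ * Real.Gamma a₂ * Real.Gamma ((k : ℝ) + b)) * x ^ k / (Nat.factorial k : ℝ)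

/-- Confluent hypergeometric (Kummer) series `₁F₁(a;b;x)`. -/
noncomputable def hyp1F1 (a b x : ℝ) : ℝ :=
  ∑' k : ℕ, Real.Gamma ((k : ℝ) + a) * Real.Gamma b /
    (Real.Gamma a * Real.Gamma ((k : ℝ) + b)) * x ^ k / (Nat.factorial k : ℝ)

/-- Generalized Laguerre polynomial of degree `n` with parameter `α`. -/
noncomputable def laguerreL (n : ℕ) (α x : ℝ) : ℝ :=
  ∑ i ∈ Finset.range (n + 1),
    (-1 : ℝ) ^ i * Real.Gamma ((n : ℝ) + α + 1) /
      (Real.Gamma (α + (i : ℝ) + 1) * (Nat.factorial (n - i) : ℝ) * (Nat.factorial i : ℝ)) * x ^ i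

/-- Negative binomial pmf with parameters `φ > 0` and `r ∈ (0,1)`. -/
noncomputable def nbinomPmf (φ r : ℝ) (u : ℕ) : ℝ :=
  Real.Gamma (φ + u) / (Real.Gamma φ * (Nat.factorial u : ℝ)) * (1 - r) ^ φ * r ^ u

/-- The quantity `ω(y₁,y₂)` appearing in the pairwise joint density of the NSVt model. -/
noncomputable def omegaFn (ν σ r μ₁ μ₂ y₁ y₂ : ℝ) : ℝ :=
  ((1 + (1 - r) * (y₁ - μ₁) ^ 2 / (ν * σ ^ 2)) *
    (1 + (1 - r) * (y₂ - μ₂) ^ 2 / (ν * σ ^ 2)))⁻¹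

/-- Pairwise joint density of the NSVt model (with `r = ρʲ`). -/
noncomputable def pairDensity (ν σ r μ₁ μ₂ y₁ y₂ : ℝ) : ℝ :=
  (1 - r) ^ (ν / 2 + 1) / (Real.pi * ν * σ ^ 2) *
    (Real.Gamma ((ν + 1) / 2) / Real.Gamma (ν / 2)) ^ 2 *
    omegaFn ν σ r μ₁ μ₂ y₁ y₂ ^ ((ν + 1) / 2) *
    hyp2F1 ((ν + 1) / 2) ((ν + 1) / 2) (ν / 2) (r * omegaFn ν σ r μ₁ μ₂ y₁ y₂)


lemma eq_of_log_eq' {a b : ℝ} (ha : 0 < a) (hb : 0 < b) (h : Real.log a = Real.log b) :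
    a = b := by
  rw [← Real.exp_log ha, ← Real.exp_log hb, h]

set_option maxHeartbeats 1000000

/-- conditional inverse moment of the GAR(1) process. -/
theorem gar_cond_inv_moment (ν r z : ℝ) (hν : 2 < ν) (hr : r ∈ Set.Ioo (0 : ℝ) 1)
    (hz : 0 < z) :
    (∫ z' in Set.Ioi (0 : ℝ), (z')⁻¹ * kibble (ν / 2) r z' z)
      = ((ν / 2) ^ (ν / 2) * z ^ (ν / 2 - 1) * Real.exp (-(ν / 2) * z) / Real.Gamma (ν / 2)) *
          (ν / (2 * (1 - r)) * Real.exp (-(ν * z * r) / (2 * (1 - r))) *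
            ∑' k : ℕ,
              (ν * z * r / (2 * (1 - r))) ^ k /
                ((Nat.factorial k : ℝ) * (ν / 2 + (k : ℝ) - 1))) := by
 
  have hν0 : 0 < ν := by linarith
  have hr0 : 0 < r := hr.1
  have hr1 : r < 1 := hr.2
  have h1r : 0 < 1 - r := by linarith
  have hc : 0 < ν / 2 / (1 - r) := by positivity
  set F : ℕ → ℝ → ℝ := fun k z' =>
    (ν / 2) ^ (ν / 2 + 1) / ((1 - r) * Real.Gamma (ν / 2)) *
        Real.exp (-(ν / 2 / (1 - r) * z)) *
        ((ν / 2 / (1 - r)) ^ (2 * (k : ℝ) + ν / 2 - 1) * r ^ (k : ℝ) *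
            z ^ ((k : ℝ) + ν / 2 - 1) /
          (Real.Gamma ((k : ℝ) + (ν / 2 - 1) + 1) * (Nat.factorial k : ℝ))) *
      (z' ^ ((k : ℝ) + ν / 2 - 1 - 1) * Real.exp (-(ν / 2 / (1 - r) * z'))) with hF
  have hpt : ∀ z' ∈ Set.Ioi (0 : ℝ), (z')⁻¹ * kibble (ν / 2) r z' z = ∑' k : ℕ, F k z' := by
    intro z' hz'
    rw [Set.mem_Ioi] at hz'
    simp only [hF, kibble, besselI]
    rw [← tsum_mul_left, ← tsum_mul_left]
    refine tsum_congr fun k => ?_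
    have hk0 : (0:ℝ) ≤ (k:ℝ) := Nat.cast_nonneg k
    have hGa : (0:ℝ) < (k:ℝ) + (ν / 2 - 1) + 1 := by linarith
    apply eq_of_log_eq' (by positivity) (by positivity)
    simp (disch := first | positivity | exact ne_of_gt (by positivity) |
        exact ne_of_gt (by linarith) | linarith)
      only [Real.log_mul, Real.log_div, Real.log_inv, Real.log_rpow, Real.log_exp,
        Real.log_pow, Real.log_one, Real.log_sqrt]
    have h1r' : (1:ℝ) - r ≠ 0 := ne_of_gt h1r
    field_simp
    ring
  have hint : ∀ k : ℕ, Integrable (F k) (volume.restrict (Set.Ioi (0:ℝ))) := by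
    intro k
    have hk0 : (0:ℝ) ≤ (k:ℝ) := Nat.cast_nonneg k
    have base : IntegrableOn
        (fun z' : ℝ => z' ^ ((k : ℝ) + ν / 2 - 1 - 1) *
          Real.exp (-(ν / 2 / (1 - r) * z'))) (Set.Ioi 0) volume := by
      have h := integrableOn_rpow_mul_exp_neg_mul_rpow
        (s := (k : ℝ) + ν / 2 - 1 - 1) (p := 1) (b := ν / 2 / (1 - r))
        (by linarith) zero_lt_one hc
      simpa [Real.rpow_one, neg_mul] using h
    rw [hF]
    exact base.const_mul _
  have hval : ∀ k : ℕ, (∫ z' in Set.Ioi (0:ℝ), F k z')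
      = ((ν / 2) ^ (ν / 2) * z ^ (ν / 2 - 1) * Real.exp (-(ν / 2) * z) / Real.Gamma (ν / 2)) *
          (ν / (2 * (1 - r)) * Real.exp (-(ν * z * r) / (2 * (1 - r))) *
            ((ν * z * r / (2 * (1 - r))) ^ k /
              ((Nat.factorial k : ℝ) * (ν / 2 + (k : ℝ) - 1)))) := by
    intro k
    have hk0 : (0:ℝ) ≤ (k:ℝ) := Nat.cast_nonneg k
    have haa : (0:ℝ) < (k:ℝ) + ν / 2 - 1 := by linarith
    have ha' : (0:ℝ) < ν / 2 + (k:ℝ) - 1 := by linarith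
    simp only [hF]
    rw [MeasureTheory.integral_const_mul,
      Real.integral_rpow_mul_exp_neg_mul_Ioi haa hc]
    rw [show (k:ℝ) + (ν / 2 - 1) + 1 = ((k:ℝ) + ν / 2 - 1) + 1 by ring,
      Real.Gamma_add_one (ne_of_gt haa)]
    apply eq_of_log_eq' (by positivity) (by positivity)
    simp (disch := first | positivity | exact ne_of_gt (by positivity) |
        exact ne_of_gt (by linarith) | linarith)
      only [Real.log_mul, Real.log_div, Real.log_inv, Real.log_rpow, Real.log_exp,
        Real.log_pow, Real.log_one]
    have h1r' : (1:ℝ) - r ≠ 0 := ne_of_gt h1r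
    field_simp
    ring
  have hnormval : ∀ k : ℕ, (∫ z' in Set.Ioi (0:ℝ), ‖F k z'‖)
      = ∫ z' in Set.Ioi (0:ℝ), F k z' := by
    intro k
    refine MeasureTheory.setIntegral_congr_fun measurableSet_Ioi fun z' hz' => ?_
    rw [Set.mem_Ioi] at hz'
    have hk0 : (0:ℝ) ≤ (k:ℝ) := Nat.cast_nonneg k
    have hGa : (0:ℝ) < (k:ℝ) + (ν / 2 - 1) + 1 := by linarith
    refine Real.norm_of_nonneg ?_
    rw [hF]
    positivity
  have hsum : Summable (fun k : ℕ => ∫ z' in Set.Ioi (0:ℝ), ‖F k z'‖) := by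
    simp only [hnormval, hval]
    have hd : (0:ℝ) < ν / 2 - 1 := by linarith
    have hb : Summable (fun k : ℕ =>
        ((ν / 2) ^ (ν / 2) * z ^ (ν / 2 - 1) * Real.exp (-(ν / 2) * z) / Real.Gamma (ν / 2)) *
          (ν / (2 * (1 - r)) * Real.exp (-(ν * z * r) / (2 * (1 - r))) *
            ((ν * z * r / (2 * (1 - r))) ^ k / ((Nat.factorial k : ℝ) * (ν / 2 - 1))))) := by
      refine Summable.mul_left _ (Summable.mul_left _ ?_)
      simpa [div_div] using
        (Real.summable_pow_div_factorial (ν * z * r / (2 * (1 - r)))).div_const (ν / 2 - 1)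
    refine Summable.of_nonneg_of_le (fun k => ?_) (fun k => ?_) hb
    · have hk0 : (0:ℝ) ≤ (k:ℝ) := Nat.cast_nonneg k
      have ha' : (0:ℝ) < ν / 2 + (k:ℝ) - 1 := by linarith
      positivity
    · have hk0 : (0:ℝ) ≤ (k:ℝ) := Nat.cast_nonneg k
      have ha' : (0:ℝ) < ν / 2 + (k:ℝ) - 1 := by linarith
      have hfac : (0:ℝ) < (Nat.factorial k : ℝ) := by positivity
      refine mul_le_mul_of_nonneg_left (mul_le_mul_of_nonneg_left ?_ (by positivity))
        (by positivity)
      refine div_le_div_of_nonneg_left (by positivity) (by positivity) ?_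
      refine mul_le_mul_of_nonneg_left (by linarith) hfac.le
  rw [MeasureTheory.setIntegral_congr_fun measurableSet_Ioi hpt,
    ← MeasureTheory.integral_tsum_of_summable_integral_norm hint hsum]
  conv_rhs => rw [← tsum_mul_left, ← tsum_mul_left]
  exact tsum_congr fun k => hval k
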